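/- arXiv:1503.08044 — 4 statements merged into one kernel-verified Lean document; each statement's English description precedes it below -/
import Mathlib

section
/- (Burnside) Let V be a finite-dimensional complex vector space with dim V ≥ 1, and let 𝔄 ⊆ End(V) be a unital subalgebra such that every nonzero vector of V is cyclic for 𝔄 (i.e., 𝔄 acts irreducibly). Then 𝔄 = End(V). -/
theorem stmt_3 (V : Type*) [AddCommGroup V] [Module ℂ V] [FiniteDimensional ℂ V]
    (h1 : 1 ≤ Module.finrank ℂ V) (𝔄 : Subalgebra ℂ (Module.End ℂ V))
    (hcyc : ∀ v : V, v ≠ 0 → ∀ w : V, ∃ A ∈ 𝔄, A v = w) :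
    𝔄 = ⊤ := by
  have hnt : Nontrivial V := Module.nontrivial_of_finrank_pos (R := ℂ) (by omega)
  -- Schur's lemma, concretely
  have schur : ∀ f : Module.End ℂ V, (∀ A ∈ 𝔄, A * f = f * A) →
      ∃ c : ℂ, ∀ v : V, f v = c • v := by
    intro f hf
    obtain ⟨c, hc⟩ := Module.End.exists_eigenvalue f
    obtain ⟨v, hv⟩ := hc.exists_hasEigenvector
    refine ⟨c, fun w => ?_⟩
    obtain ⟨A, hA, hAv⟩ := hcyc v hv.2 w
    have h2 := congrArg (fun g : Module.End ℂ V => g v) (hf A hA)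
    simp only [Module.End.mul_apply] at h2
    rw [← hAv, ← h2, hv.apply_eq_smul, map_smul]
  -- V is a simple 𝔄-module
  have hsimple : IsSimpleModule 𝔄 V := by
    have hnt2 : Nontrivial (Submodule 𝔄 V) :=
      ⟨⊥, ⊤, fun h => by
        obtain ⟨v, hv⟩ := exists_ne (0 : V)
        have hvb : v ∈ (⊥ : Submodule 𝔄 V) := h.symm ▸ (Submodule.mem_top : v ∈ (⊤ : Submodule 𝔄 V))
        exact hv (by simpa using hvb)⟩
    refine { toIsSimpleOrder := ⟨fun W => ?_⟩ }
    · rcases eq_or_ne W ⊥ with h | h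
      · exact Or.inl h
      · refine Or.inr ?_
        obtain ⟨v, hvW, hv0⟩ := W.exists_mem_ne_zero_of_ne_bot h
        rw [eq_top_iff]
        intro w _
        obtain ⟨A, hA, hAv⟩ := hcyc v hv0 w
        have : (⟨A, hA⟩ : 𝔄) • v = w := hAv
        rw [← this]
        exact W.smul_mem _ hvW
  set n := Module.finrank ℂ V with hn
  obtain ⟨b⟩ : Nonempty (Module.Basis (Fin n) ℂ V) := ⟨Module.finBasis ℂ V⟩
  classical
  -- Fin n → V is a semisimple 𝔄-module
  have hss : IsSemisimpleModule 𝔄 (Fin n → V) := by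
    refine isSemisimpleModule_of_isSemisimpleModule_submodule'
      (p := fun i => LinearMap.range (LinearMap.single 𝔄 (fun _ : Fin n => V) i))
      (fun i => IsSemisimpleModule.range _) ?_
    simp_rw [LinearMap.range_eq_map, Submodule.iSup_map_single, Submodule.pi_top]
  set e : Fin n → V := fun i => b i with he
  set W : Submodule 𝔄 (Fin n → V) := Submodule.span 𝔄 {e} with hWdef
  obtain ⟨W', hW⟩ := exists_isCompl W
  set π : (Fin n → V) →ₗ[𝔄] (Fin n → V) :=
    W.subtype.comp (W.projectionOnto W' hW) with hπ
  have hπ_mem : ∀ x, π x ∈ W := fun x => (W.projectionOnto W' hW x).2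
  have hπ_id : ∀ x ∈ W, π x = x := by
    intro x hx
    have h3 := Submodule.linearProjOfIsCompl_apply_left hW ⟨x, hx⟩
    simp only [hπ, LinearMap.comp_apply]
    rw [h3]
    rfl
  -- smul facts
  have hsmul : ∀ (a : 𝔄) (x : Fin n → V) (i : Fin n), (a • x) i = (a : Module.End ℂ V) (x i) :=
    fun _ _ _ => rfl
  have halg : ∀ (c : ℂ) (v : V), ((algebraMap ℂ 𝔄 c) : 𝔄) • v = c • v := by
    intro c v
    show (algebraMap ℂ (Module.End ℂ V) c) v = c • v
    simp [Module.algebraMap_end_apply]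
  -- matrix entries of π are scalars
  have key : ∀ i j : Fin n, ∃ c : ℂ, ∀ v : V, (π (Pi.single j v)) i = c • v := by
    intro i j
    have hsingle : ∀ (A : 𝔄) (v : V),
        Pi.single j ((A : Module.End ℂ V) v) = A • (Pi.single j v : Fin n → V) := by
      intro A v
      funext k
      rw [hsmul]
      rcases eq_or_ne k j with rfl | hkj
      · simp
      · simp [Pi.single_eq_of_ne hkj]
    -- the map v ↦ (π (Pi.single j v)) i is ℂ-linear
    have hadd : ∀ v w : V, (π (Pi.single j (v + w))) i
        = (π (Pi.single j v)) i + (π (Pi.single j w)) i := by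
      intro v w
      have h4 : (Pi.single j (v + w) : Fin n → V) = Pi.single j v + Pi.single j w := by
        funext k
        rcases eq_or_ne k j with rfl | hkj
        · simp
        · simp [Pi.single_eq_of_ne hkj]
      rw [h4, map_add]
      rfl
    have hsmulC : ∀ (c : ℂ) (v : V), (π (Pi.single j (c • v))) i = c • (π (Pi.single j v)) i := by
      intro c v
      have h1 : (Pi.single j (c • v) : Fin n → V) = (algebraMap ℂ 𝔄 c) • (Pi.single j v : Fin n → V) := by
        funext k
        rw [hsmul]
        rcases eq_or_ne k j with rfl | hkj
        · have := halg c v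
          simp only [Pi.single_eq_same]
          exact this.symm
        · simp [Pi.single_eq_of_ne hkj]
      rw [h1, map_smul, hsmul]
      exact halg c _
    set g : Module.End ℂ V :=
      { toFun := fun v => (π (Pi.single j v)) i
        map_add' := hadd
        map_smul' := hsmulC } with hg
    have hcomm : ∀ A ∈ 𝔄, A * g = g * A := by
      intro A hA
      ext v
      show A (g v) = g (A v)
      simp only [hg, LinearMap.coe_mk, AddHom.coe_mk]
      rw [show A v = ((⟨A, hA⟩ : 𝔄) : Module.End ℂ V) v from rfl,
        hsingle ⟨A, hA⟩ v, map_smul, hsmul]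
    obtain ⟨c, hc⟩ := schur g hcomm
    exact ⟨c, fun v => hc v⟩
  choose c hc using key
  -- π acts as the matrix c
  have hπmat : ∀ (x : Fin n → V) (i : Fin n), (π x) i = ∑ j, c i j • x j := by
    intro x i
    have hx : x = ∑ j, Pi.single j (x j) := by
      funext k
      simp [Finset.sum_apply, Pi.single_apply]
    conv_lhs => rw [hx]
    rw [map_sum]
    simp only [Finset.sum_apply]
    exact Finset.sum_congr rfl fun j _ => hc i j (x j)
  have heW : e ∈ W := Submodule.mem_span_singleton_self e
  have hπe : ∀ i : Fin n, ∑ j, c i j • b j = b i := by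
    intro i
    have := congrFun (hπ_id e heW) i
    rw [hπmat] at this
    exact this
  -- conclude
  rw [eq_top_iff]
  rintro T -
  set Te : Fin n → V := fun i => T (b i) with hTe
  have hTeW : Te ∈ W := by
    have : π Te = Te := by
      funext i
      rw [hπmat]
      calc ∑ j, c i j • T (b j) = T (∑ j, c i j • b j) := by
            rw [map_sum]; exact Finset.sum_congr rfl fun j _ => (map_smul T _ _).symm
        _ = T (b i) := by rw [hπe]
    rw [← this]
    exact hπ_mem Te
  rw [hWdef, Submodule.mem_span_singleton] at hTeW
  obtain ⟨a, ha⟩ := hTeW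
  have : (a : Module.End ℂ V) = T := by
    apply b.ext
    intro i
    have := congrFun ha i
    rw [hsmul] at this
    exact this
  rw [← this]
  exact a.2
end

section
/- Let A₁, …, A_m ∈ End(V) generate a unital associative algebra 𝔄, where V is an n-dimensional complex vector space. If V is a cyclic representation of 𝔄 (there exists a cyclic vector), then for every (μ₁, …, μ_m) ∈ ℂ^m, the rank of the horizontal concatenation [A₁ − μ₁ I | ⋯ | A_m − μ_m I] is at least n − 1; equivalently, the intersection of the kernels of the adjoints (A_j − μ_j I)* has dimension at most 1. -/
theorem stmt_4 (V : Type*) [AddCommGroup V] [Module ℂ V] [FiniteDimensional ℂ V]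
    (m : ℕ) (A : Fin m → Module.End ℂ V)
    (hcyc : ∃ v : V, ∀ w : V, ∃ a ∈ Algebra.adjoin ℂ (Set.range A), a v = w) :
    ∀ μ : Fin m → ℂ,
      Module.finrank ℂ
        ↥(⨅ j, LinearMap.ker (LinearMap.dualMap
            ((A j - μ j • 1 : Module.End ℂ V) : V →ₗ[ℂ] V))) ≤ 1 := by
  intro μ
  obtain ⟨v, hv⟩ := hcyc
  set W := ⨅ j, LinearMap.ker (LinearMap.dualMap
      ((A j - μ j • 1 : Module.End ℂ V) : V →ₗ[ℂ] V)) with hW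
  -- evaluation at v
  let f : W →ₗ[ℂ] ℂ :=
    { toFun := fun p => (p : Module.Dual ℂ V) v
      map_add' := fun p q => rfl
      map_smul' := fun c p => rfl }
  have key : ∀ p : Module.Dual ℂ V, p ∈ W →
      ∀ a ∈ Algebra.adjoin ℂ (Set.range A), ∃ c : ℂ, ∀ x : V, p (a x) = c * p x := by
    intro p hp
    have hpj : ∀ j x, p (A j x) = μ j * p x := by
      intro j x
      have h1 : p ∈ LinearMap.ker (LinearMap.dualMap
          ((A j - μ j • 1 : Module.End ℂ V) : V →ₗ[ℂ] V)) :=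
        (Submodule.mem_iInf _).mp hp j
      have h2 := LinearMap.congr_fun (LinearMap.mem_ker.mp h1) x
      simp only [LinearMap.dualMap_apply, LinearMap.zero_apply, LinearMap.sub_apply,
        LinearMap.smul_apply, Module.End.one_apply, map_sub, map_smul,
        smul_eq_mul, sub_eq_zero] at h2
      exact h2
    intro a ha
    induction ha using Algebra.adjoin_induction with
    | mem x hx =>
      obtain ⟨j, rfl⟩ := hx
      exact ⟨μ j, fun x => hpj j x⟩
    | algebraMap r =>
      refine ⟨r, fun x => ?_⟩
      simp [Module.algebraMap_end_apply]
    | add x y hx hy ihx ihy =>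
      obtain ⟨c, hc⟩ := ihx
      obtain ⟨d, hd⟩ := ihy
      exact ⟨c + d, fun x => by simp [LinearMap.add_apply, hc, hd, add_mul]⟩
    | mul x y hx hy ihx ihy =>
      obtain ⟨c, hc⟩ := ihx
      obtain ⟨d, hd⟩ := ihy
      refine ⟨c * d, fun z => ?_⟩
      have : (x * y) z = x (y z) := rfl
      rw [this, hc, hd, mul_assoc]
  have hinj : Function.Injective f := by
    rw [← LinearMap.ker_eq_bot, LinearMap.ker_eq_bot']
    intro p hp0
    have hpv : (p : Module.Dual ℂ V) v = 0 := hp0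
    apply Subtype.ext
    apply LinearMap.ext
    intro w
    obtain ⟨a, ha, rfl⟩ := hv w
    obtain ⟨c, hc⟩ := key p p.2 a ha
    simp [hc v, hpv]
  calc Module.finrank ℂ W ≤ Module.finrank ℂ ℂ :=
        LinearMap.finrank_le_finrank_of_injective hinj
    _ = 1 := Module.finrank_self ℂ
end

section
/- Let A₁, …, A_m ∈ End(V), dim V = n over ℂ, and suppose the Lie algebra generated by A₁, …, A_m (under commutators) is solvable. If for every (μ₁, …, μ_m) ∈ ℂ^m the space of covectors p ∈ V* with p ∘ (A_j − μ_j I) = 0 for all j has dimension at most r, then there exists an r-dimensional subspace ℬ ⊆ V that is cyclic for the unital associative algebra generated by A₁, …, A_m. -/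
attribute [local instance 100] LieRing.ofAssociativeRing

open Module LinearMap

namespace Stmt6Aux
set_option linter.unusedSectionVars false
set_option maxHeartbeats 1000000

lemma lie_apply' {U : Type*} [AddCommGroup U] [Module ℂ U] (f g : Module.End ℂ U) (v : U) :
    ⁅f, g⁆ v = f (g v) - g (f v) := by
  rw [LieRing.of_associative_ring_bracket]; simp [Module.End.mul_apply]


set_option linter.unusedSectionVars false
variable {U : Type*} [AddCommGroup U] [Module ℂ U] [FiniteDimensional ℂ U]

/-- Filtration by spans of iterates. -/
noncomputable def Fil (x : Module.End ℂ U) (w : U) (k : ℕ) : Submodule ℂ U :=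
  Submodule.span ℂ ((fun j : ℕ => (x ^ j) w) '' Set.Iio k)

lemma Fil_mono (x : Module.End ℂ U) (w : U) : Monotone (Fil x w) := fun _ _ h =>
  Submodule.span_mono (Set.image_mono fun _ hj => lt_of_lt_of_le hj h)

lemma Fil_zero (x : Module.End ℂ U) (w : U) : Fil x w 0 = ⊥ := by
  have : Set.Iio (0 : ℕ) = (∅ : Set ℕ) := by ext j; simp
  simp [Fil, this]

lemma pow_mem_Fil (x : Module.End ℂ U) (w : U) {j k : ℕ} (h : j < k) :
    (x ^ j) w ∈ Fil x w k :=
  Submodule.subset_span ⟨j, h, rfl⟩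

lemma pow_succ_apply (x : Module.End ℂ U) (w : U) (j : ℕ) :
    (x ^ (j + 1)) w = x ((x ^ j) w) := by
  rw [pow_succ']; rfl

lemma map_Fil_le (x : Module.End ℂ U) (w : U) (k : ℕ) :
    (Fil x w k).map x ≤ Fil x w (k + 1) := by
  rw [Fil, Submodule.map_span, Submodule.span_le]
  rintro _ ⟨_, ⟨j, hj, rfl⟩, rfl⟩
  exact Submodule.subset_span ⟨j + 1, Nat.succ_lt_succ hj, (pow_succ_apply x w j)⟩



/-- Triangularity of the action of `N` on the filtration. -/
lemma tri (x : Module.End ℂ U) (N : Submodule ℂ (Module.End ℂ U)) (lam : Module.End ℂ U → ℂ)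
    (w : U) (hN : ∀ Y ∈ N, ⁅x, Y⁆ ∈ N) (heig : ∀ Y ∈ N, Y w = lam Y • w) :
    ∀ k, ∀ Y ∈ N, Y ((x ^ k) w) - lam Y • (x ^ k) w ∈ Fil x w k := by
  intro k
  induction k with
  | zero => intro Y hY; simp [heig Y hY]
  | succ k ih =>
    intro Y hY
    set u := (x ^ k) w with hu
    have h1 : Y ((x ^ (k + 1)) w) = x (Y u) - ⁅x, Y⁆ u := by
      rw [pow_succ_apply, lie_apply']; abel
    have e : Y ((x ^ (k + 1)) w) - lam Y • (x ^ (k + 1)) w =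
        x (Y u - lam Y • u) - ((⁅x, Y⁆ u - lam ⁅x, Y⁆ • u) + lam ⁅x, Y⁆ • u) := by
      rw [h1, map_sub, map_smul, pow_succ_apply]
      abel
    rw [e]
    refine sub_mem ?_ (add_mem (Fil_mono x w (Nat.le_succ k) (ih ⁅x, Y⁆ (hN Y hY)))
      (Submodule.smul_mem _ _ (pow_mem_Fil x w (Nat.lt_succ_self k))))
    exact map_Fil_le x w k ⟨Y u - lam Y • u, ih Y hY, rfl⟩

/-- Key trace lemma: the eigenvalue function vanishes on brackets. -/
lemma lam_lie_eq_zero (x : Module.End ℂ U) (N : Submodule ℂ (Module.End ℂ U))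
    (lam : Module.End ℂ U → ℂ) (w : U) (hw : w ≠ 0)
    (hN : ∀ Y ∈ N, ⁅x, Y⁆ ∈ N) (heig : ∀ Y ∈ N, Y w = lam Y • w) :
    ∀ Y ∈ N, lam ⁅x, Y⁆ = 0 := by
  obtain ⟨n, hn⟩ := monotone_stabilizes_iff_noetherian.mpr inferInstance
    ⟨Fil x w, Fil_mono x w⟩
  set k₀ := max n 1 with hk₀
  have hstab : Fil x w (k₀ + 1) = Fil x w k₀ :=
    ((hn (k₀ + 1) (le_trans (le_max_left n 1) (Nat.le_succ k₀))).symm.trans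
      (hn k₀ (le_max_left n 1)))
  set P := Fil x w k₀ with hP
  have hwP : w ∈ P := by
    have := pow_mem_Fil x w (show 0 < k₀ from lt_of_lt_of_le Nat.one_pos (le_max_right n 1))
    simpa using this
  have hxP : ∀ u ∈ P, x u ∈ P := fun u hu => by
    have : x u ∈ Fil x w (k₀ + 1) := map_Fil_le x w k₀ ⟨u, hu, rfl⟩
    rwa [hstab] at this
  have hYP : ∀ Y ∈ N, ∀ u ∈ P, Y u ∈ P := by
    intro Y hY u hu
    have hmap : P.map Y ≤ P := by
      rw [hP, Fil, Submodule.map_span, Submodule.span_le]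
      rintro _ ⟨_, ⟨j, hj, rfl⟩, rfl⟩
      have h1 := tri x N lam w hN heig j Y hY
      have : Y ((x ^ j) w) = (Y ((x ^ j) w) - lam Y • (x ^ j) w) + lam Y • (x ^ j) w := by abel
      rw [this]
      exact add_mem (Fil_mono x w hj.le h1) (Submodule.smul_mem _ _ (pow_mem_Fil x w hj))
    exact hmap ⟨u, hu, rfl⟩
  -- nilpotency of (Y - lam Y • 1) on the filtration
  have hnil : ∀ Y ∈ N, ∀ k, ∀ u ∈ Fil x w k, ((Y - lam Y • 1) ^ k) u = 0 := by
    intro Y hY k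
    induction k with
    | zero => intro u hu; rw [Fil_zero] at hu; simp [(Submodule.mem_bot ℂ).mp hu]
    | succ k ih =>
      intro u hu
      have hstep : (Fil x w (k + 1)).map (Y - lam Y • 1) ≤ Fil x w k := by
        rw [Fil, Submodule.map_span, Submodule.span_le]
        rintro _ ⟨_, ⟨j, hj, rfl⟩, rfl⟩
        have h1 := tri x N lam w hN heig j Y hY
        have h2 : (Y - lam Y • 1) ((x ^ j) w) = Y ((x ^ j) w) - lam Y • (x ^ j) w := by
          simp
        rw [h2]
        exact Fil_mono x w (Nat.lt_succ_iff.mp hj) h1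
      have : ((Y - lam Y • 1) ^ (k + 1)) u = ((Y - lam Y • 1) ^ k) ((Y - lam Y • 1) u) := by
        rw [pow_succ]; rfl
      rw [this]
      exact ih _ (hstep ⟨u, hu, rfl⟩)
  -- conclude via traces
  intro Y hY
  set z := ⁅x, Y⁆ with hz
  have hzN : z ∈ N := hN Y hY
  have hPz : ∀ u ∈ P, z u ∈ P := hYP z hzN
  have hPY : ∀ u ∈ P, Y u ∈ P := hYP Y hY
  have hPn : ∀ u ∈ P, (z - lam z • 1) u ∈ P := fun u hu => by
    have : (z - lam z • 1) u = z u - lam z • u := by simp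
    rw [this]
    exact sub_mem (hPz u hu) (Submodule.smul_mem _ _ hu)
  -- trace of restriction of z is zero
  have htr0 : trace ℂ P (z.restrict hPz) = 0 := by
    have hcomm : z.restrict hPz =
        (x.restrict hxP) * (Y.restrict hPY) - (Y.restrict hPY) * (x.restrict hxP) := by
      ext u
      simp only [restrict_coe_apply, LinearMap.sub_apply, Module.End.mul_apply,
        AddSubgroupClass.coe_sub, restrict_coe_apply]
      rw [hz, lie_apply']
    rw [hcomm, map_sub, trace_mul_comm, sub_self]
  -- z.restrict = lam z • 1 + nilpotent
  have hdecomp : z.restrict hPz = lam z • (1 : Module.End ℂ P) + (z - lam z • 1).restrict hPn := by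
    ext u
    simp only [LinearMap.add_apply, restrict_coe_apply, LinearMap.smul_apply,
      Module.End.one_apply, AddSubmonoid.coe_add, Submodule.coe_smul, LinearMap.sub_apply]
    simp
  have hnilr : IsNilpotent ((z - lam z • 1).restrict hPn) := by
    refine ⟨k₀, ?_⟩
    rw [Module.End.pow_restrict k₀ hPn]
    ext u
    simp only [restrict_coe_apply, LinearMap.zero_apply, ZeroMemClass.coe_zero]
    exact hnil z hzN k₀ u.1 u.2
  have htrn : trace ℂ P ((z - lam z • 1).restrict hPn) = 0 := by
    have := LinearMap.isNilpotent_trace_of_isNilpotent hnilr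
    simpa using this.eq_zero
  have hfr : (0 : ℂ) = lam z * (finrank ℂ P : ℂ) := by
    have := htr0
    rw [hdecomp, map_add, htrn, add_zero, map_smul, trace_one] at this
    simpa [mul_comm] using this.symm
  have hfrpos : 0 < finrank ℂ P := by
    have : Nontrivial P := by
      refine Submodule.nontrivial_iff_ne_bot.mpr fun hb => hw ?_
      rw [hb] at hwP
      exact (Submodule.mem_bot ℂ).mp hwP
    exact finrank_pos
  have : (finrank ℂ P : ℂ) ≠ 0 := Nat.cast_ne_zero.mpr hfrpos.ne'
  rcases mul_eq_zero.mp hfr.symm with h | h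
  · exact h
  · exact absurd h this





theorem lie_thm (U : Type*) [AddCommGroup U] [Module ℂ U] [FiniteDimensional ℂ U] [Nontrivial U] :
    ∀ (n : ℕ) (L : LieSubalgebra ℂ (Module.End ℂ U)),
      finrank ℂ (L : Submodule ℂ (Module.End ℂ U)) = n → LieAlgebra.IsSolvable ↥L →
      ∃ v : U, v ≠ 0 ∧ ∀ X ∈ L, ∃ c : ℂ, X v = c • v := by
  intro n
  induction n using Nat.strong_induction_on with
  | _ n IH =>
  intro L hfrL hsolv
  classical
  haveI := hsolv
  by_cases hbot : (L : Submodule ℂ (Module.End ℂ U)) = ⊥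
  · obtain ⟨v, hv⟩ := exists_ne (0 : U)
    refine ⟨v, hv, fun X hX => ⟨0, ?_⟩⟩
    have : X = 0 := by
      have : X ∈ (⊥ : Submodule ℂ (Module.End ℂ U)) := hbot ▸ hX
      simpa using this
    simp [this]
  -- L is nontrivial
  obtain ⟨x₀, hx₀L, hx₀⟩ : ∃ x₀, x₀ ∈ L ∧ x₀ ≠ 0 := by
    rcases Submodule.exists_mem_ne_zero_of_ne_bot hbot with ⟨x₀, h1, h2⟩
    exact ⟨x₀, h1, h2⟩
  haveI : Nontrivial ↥L := by
    refine ⟨⟨x₀, hx₀L⟩, 0, fun h => hx₀ ?_⟩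
    simpa [Subtype.ext_iff] using h
  -- derived ideal is proper
  have hD : LieAlgebra.derivedSeries ℂ ↥L 1 < ⊤ :=
    LieAlgebra.derivedSeries_lt_top_of_solvable ℂ ↥L
  set D := LieAlgebra.derivedSeries ℂ ↥L 1 with hDdef
  have hDne : (D : Submodule ℂ ↥L) ≠ ⊤ := by
    intro h
    apply hD.ne
    ext y
    simp only [LieSubmodule.mem_top, iff_true]
    have : y ∈ (D : Submodule ℂ ↥L) := by rw [h]; trivial
    exact this
  -- a nonzero functional vanishing on D
  obtain ⟨f, hfD, hf0⟩ : ∃ f : ↥L →ₗ[ℂ] ℂ, (∀ y ∈ (D : Submodule ℂ ↥L), f y = 0) ∧ f ≠ 0 := by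
    have h1 : (D : Submodule ℂ ↥L).dualAnnihilator ≠ ⊥ := by
      intro h
      apply hDne
      apply Subspace.dualAnnihilator_inj.mp
      rw [h, Submodule.dualAnnihilator_top]
    rcases Submodule.exists_mem_ne_zero_of_ne_bot h1 with ⟨f, hf1, hf2⟩
    exact ⟨f, Submodule.mem_dualAnnihilator f |>.mp hf1, hf2⟩
  obtain ⟨xd, hxd⟩ : ∃ xd : ↥L, f xd ≠ 0 := by
    by_contra h
    push_neg at h
    exact hf0 (by ext y; simp [h y])
  set I : Submodule ℂ ↥L := ker f with hIdef
  have hDI : (D : Submodule ℂ ↥L) ≤ I := fun y hy => by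
    simp only [hIdef, mem_ker]; exact hfD y hy
  -- the codimension-one Lie subalgebra K
  have lie_mem_K : ∀ {x y : Module.End ℂ U},
      x ∈ Submodule.map (L.incl : ↥L →ₗ[ℂ] Module.End ℂ U) I →
      y ∈ L → ⁅x, y⁆ ∈ Submodule.map (L.incl : ↥L →ₗ[ℂ] Module.End ℂ U) I := by
    rintro x y hx hy
    rcases Submodule.mem_map.mp hx with ⟨x', hx', rfl⟩
    set y' : ↥L := ⟨y, hy⟩ with hy'
    have hmem : ⁅x', y'⁆ ∈ (D : Submodule ℂ ↥L) := by
      have : ⁅x', y'⁆ ∈ D := by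
        rw [hDdef, LieAlgebra.derivedSeries_def, LieAlgebra.derivedSeriesOfIdeal_succ,
          LieAlgebra.derivedSeriesOfIdeal_zero]
        exact LieSubmodule.lie_mem_lie (I := ⊤) (N := ⊤)
          (LieSubmodule.mem_top x') (LieSubmodule.mem_top y')
      exact this
    refine Submodule.mem_map.mpr ⟨⁅x', y'⁆, hDI hmem, ?_⟩
    show ((⁅x', y'⁆ : ↥L) : Module.End ℂ U) = _
    rw [LieSubalgebra.coe_bracket]
    rfl
  set K : LieSubalgebra ℂ (Module.End ℂ U) :=
    { Submodule.map (L.incl : ↥L →ₗ[ℂ] Module.End ℂ U) I with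
      lie_mem' := fun {x y} hx hy => by
        have hyL : y ∈ L := by
          rcases Submodule.mem_map.mp hy with ⟨y', _, rfl⟩
          exact y'.2
        have h1 : ⁅y, x⁆ ∈ Submodule.map (L.incl : ↥L →ₗ[ℂ] Module.End ℂ U) I := by
          have hxL : x ∈ L := by
            rcases Submodule.mem_map.mp hx with ⟨x', _, rfl⟩
            exact x'.2
          exact lie_mem_K hy hxL
        rw [← lie_skew x y]
        exact Submodule.neg_mem _ h1 } with hKdef
  have hKsub : (K : Submodule ℂ (Module.End ℂ U)) =
      Submodule.map (L.incl : ↥L →ₗ[ℂ] Module.End ℂ U) I := rfl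
  have hKL : K ≤ L := by
    intro z hz
    rcases Submodule.mem_map.mp hz with ⟨z', _, rfl⟩
    exact z'.2
  haveI hsolvK : LieAlgebra.IsSolvable ↥K :=
    (LieSubalgebra.inclusion_injective hKL).lieAlgebra_isSolvable
      (f := LieSubalgebra.inclusion hKL)
  have hfrK : finrank ℂ (K : Submodule ℂ (Module.End ℂ U)) < n := by
    rw [hKsub]
    have h1 : finrank ℂ (Submodule.map (L.incl : ↥L →ₗ[ℂ] Module.End ℂ U) I) = finrank ℂ I := by
      symm
      apply LinearEquiv.finrank_eq
      exact Submodule.equivMapOfInjective _ (fun a b h => Subtype.coe_injective h) I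
    rw [h1]
    have h2 : I < ⊤ := lt_top_iff_ne_top.mpr fun h => hxd (by
      have : xd ∈ I := h ▸ Submodule.mem_top
      simpa [hIdef] using this)
    calc finrank ℂ I < finrank ℂ ↥L := Submodule.finrank_lt h2.ne
    _ = n := by rw [← hfrL]; rfl
  obtain ⟨v₀, hv₀, heigK⟩ := IH _ hfrK K rfl hsolvK
  -- the eigenvalue function
  set lam : Module.End ℂ U → ℂ := fun Y => if h : ∃ c : ℂ, Y v₀ = c • v₀ then h.choose else 0
    with hlamdef
  have hlam : ∀ Y ∈ K, Y v₀ = lam Y • v₀ := by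
    intro Y hY
    have h := heigK Y hY
    simp only [hlamdef, dif_pos h]
    exact h.choose_spec
  -- the joint eigenspace W
  set W : Submodule ℂ U :=
    { carrier := {u : U | ∀ Y ∈ K, Y u = lam Y • u}
      add_mem' := fun {a b} ha hb Y hY => by
        simp only [map_add, ha Y hY, hb Y hY, smul_add]
      zero_mem' := fun Y hY => by simp
      smul_mem' := fun c u hu Y hY => by
        simp only [map_smul, hu Y hY, smul_comm c] } with hWdef
  have hv₀W : v₀ ∈ W := hlam
  have hmemW : ∀ u : U, u ∈ W ↔ ∀ Y ∈ K, Y u = lam Y • u := fun u => Iff.rfl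
  -- brackets of L with K lie in K
  have hNbr : ∀ x ∈ L, ∀ Y ∈ K, ⁅x, Y⁆ ∈ K := by
    intro x hx Y hY
    have h1 : ⁅Y, x⁆ ∈ K := lie_mem_K hY hx
    rw [← lie_skew x Y]
    exact Submodule.neg_mem _ h1
  -- lam vanishes on brackets
  have hzero : ∀ x ∈ L, ∀ Y ∈ K, lam ⁅x, Y⁆ = 0 := by
    intro x hx
    exact lam_lie_eq_zero x (K : Submodule ℂ (Module.End ℂ U)) lam v₀ hv₀
      (fun Y hY => hNbr x hx Y hY) (fun Y hY => hlam Y hY)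
  -- W is invariant under L
  have hWinv : ∀ x ∈ L, ∀ u ∈ W, x u ∈ W := by
    intro x hx u hu Y hY
    have h1 : Y (x u) = x (Y u) - ⁅x, Y⁆ u := by rw [lie_apply']; abel
    rw [h1, hu _ (hNbr x hx Y hY), hzero x hx Y hY, hu Y hY, map_smul]
    simp
  -- eigenvector of xd on W
  have hxdW : ∀ u ∈ W, (xd : Module.End ℂ U) u ∈ W := hWinv _ xd.2
  haveI : Nontrivial ↥W := Submodule.nontrivial_iff_ne_bot.mpr (fun h => hv₀ (by
    have : v₀ ∈ (⊥ : Submodule ℂ U) := h ▸ hv₀W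
    simpa using this))
  set xr : Module.End ℂ ↥W := (xd : Module.End ℂ U).restrict hxdW with hxrdef
  obtain ⟨μ, hμ⟩ := Module.End.exists_eigenvalue xr
  obtain ⟨v', hv'⟩ := hμ.exists_hasEigenvector
  refine ⟨(v' : U), by simpa using hv'.right, ?_⟩
  intro X hX
  set X' : ↥L := ⟨X, hX⟩ with hX'
  set t : ℂ := f X' / f xd with htdef
  set Y' : ↥L := X' - t • xd with hY'
  have hY'I : Y' ∈ I := by
    simp only [hIdef, mem_ker, hY', map_sub, map_smul, htdef]
    rw [smul_eq_mul, div_mul_cancel₀ _ hxd, sub_self]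
  have hY'K : (Y' : Module.End ℂ U) ∈ K := Submodule.mem_map.mpr ⟨Y', hY'I, rfl⟩
  have hXeq : X = (Y' : Module.End ℂ U) + t • (xd : Module.End ℂ U) := by
    have hsm : ((t • xd : ↥L) : Module.End ℂ U) = t • (xd : Module.End ℂ U) := rfl
    have : (Y' : Module.End ℂ U) = X - t • (xd : Module.End ℂ U) := by
      rw [hY']
      rw [show ((X' - t • xd : ↥L) : Module.End ℂ U)
        = (X' : Module.End ℂ U) - ((t • xd : ↥L) : Module.End ℂ U) from rfl, hsm]
    rw [this]; abel
  have hxdv : (xd : Module.End ℂ U) (v' : U) = μ • (v' : U) := by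
    have h1 : xr v' = μ • v' := hv'.apply_eq_smul
    have := congrArg (Subtype.val) h1
    simpa [hxrdef, restrict_coe_apply] using this
  have hY'v : (Y' : Module.End ℂ U) (v' : U) = lam (Y' : Module.End ℂ U) • (v' : U) := by
    have hWv' : (v' : U) ∈ W := v'.2
    exact hWv' _ hY'K
  refine ⟨lam (Y' : Module.End ℂ U) + t * μ, ?_⟩
  rw [hXeq]
  simp only [LinearMap.add_apply, LinearMap.smul_apply, hY'v, hxdv]
  rw [add_smul, smul_smul]




/-- Generic complement lemma. -/
lemma generic {X : Type*} [AddCommGroup X] [Module ℂ X] [FiniteDimensional ℂ X]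
    (s : Finset (Submodule ℂ X)) (r : ℕ) (hs : ∀ E ∈ s, finrank ℂ E ≤ r) :
    ∀ t : ℕ, t + r ≤ finrank ℂ X →
      ∃ C : Submodule ℂ X, finrank ℂ C = t ∧ ∀ E ∈ s, C ⊓ E = ⊥ := by
  classical
  intro t
  induction t with
  | zero => exact fun _ => ⟨⊥, finrank_bot ℂ X, fun E _ => bot_inf_eq E⟩
  | succ t ih =>
    intro ht
    obtain ⟨C, hC1, hC2⟩ := ih (by omega)
    set s' : Finset (Submodule ℂ X) := insert C (s.image fun E => C ⊔ E) with hs'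
    have htop : (⊤ : Submodule ℂ X) ∉ s' := by
      intro h
      rcases Finset.mem_insert.mp h with h | h
      · have : finrank ℂ (⊤ : Submodule ℂ X) = finrank ℂ X := finrank_top ℂ X
        rw [h, hC1] at this
        omega
      · rcases Finset.mem_image.mp h with ⟨E, hE, hCE⟩
        have h1 := Submodule.finrank_sup_add_finrank_inf_eq C E
        have h2 := hs E hE
        have h3 : finrank ℂ (⊤ : Submodule ℂ X) = finrank ℂ X := finrank_top ℂ X
        rw [hCE, h3] at h1
        omega
    obtain ⟨v, hv⟩ : ∃ v : X, ∀ p ∈ s', v ∉ p := by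
      have h := Subspace.biUnion_ne_univ_of_top_notMem (s := s') htop
      rcases Set.ne_univ_iff_exists_notMem _ |>.mp h with ⟨v, hv⟩
      refine ⟨v, fun p hp hvp => hv ?_⟩
      exact Set.mem_biUnion hp hvp
    have hvC : v ∉ C := fun h => hv C (Finset.mem_insert_self _ _) h
    have hv0 : v ≠ 0 := fun h => hvC (h ▸ C.zero_mem)
    refine ⟨C ⊔ Submodule.span ℂ {v}, ?_, ?_⟩
    · have hinf : C ⊓ Submodule.span ℂ {v} = ⊥ := by
        rw [eq_bot_iff]
        rintro u ⟨huC, huS⟩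
        rcases Submodule.mem_span_singleton.mp huS with ⟨a, rfl⟩
        rcases eq_or_ne a 0 with h | h
        · simp [h]
        · exact absurd (by simpa [h] using C.smul_mem a⁻¹ huC) hvC
      have h1 := Submodule.finrank_sup_add_finrank_inf_eq C (Submodule.span ℂ {v})
      rw [hinf, finrank_span_singleton hv0] at h1
      simp only [finrank_bot, add_zero] at h1
      omega
    · intro E hE
      rw [eq_bot_iff]
      rintro u hu
      obtain ⟨huCE, huE⟩ := Submodule.mem_inf.mp hu
      obtain ⟨c, hc, w, hw, rfl⟩ := Submodule.mem_sup.mp huCE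
      rcases Submodule.mem_span_singleton.mp hw with ⟨a, rfl⟩
      rcases eq_or_ne a 0 with h | h
      · have : c ∈ C ⊓ E := Submodule.mem_inf.mpr ⟨hc, by simpa [h] using huE⟩
        rw [hC2 E hE] at this
        simpa [h] using this
      · exfalso
        apply hv (C ⊔ E) (Finset.mem_insert_of_mem (Finset.mem_image_of_mem _ hE))
        have h1 : c + a • v - c ∈ C ⊔ E :=
          Submodule.sub_mem _ (Submodule.mem_sup_right huE) (Submodule.mem_sup_left hc)
        have h2 : a • v ∈ C ⊔ E := by simpa using h1
        have := Submodule.smul_mem _ a⁻¹ h2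
        rwa [smul_smul, inv_mul_cancel₀ h, one_smul] at this


end Stmt6Aux


set_option maxHeartbeats 2000000 in
open Stmt6Aux in
theorem stmt_6 (V : Type*) [AddCommGroup V] [Module ℂ V] [FiniteDimensional ℂ V]
    (m r : ℕ) (hr : r ≤ Module.finrank ℂ V) (A : Fin m → Module.End ℂ V)
    (hsolv : LieAlgebra.IsSolvable
      (LieSubalgebra.lieSpan ℂ (Module.End ℂ V) (Set.range A)))
    (hrank : ∀ μ : Fin m → ℂ,
      Module.finrank ℂ
        ↥(⨅ j, LinearMap.ker (LinearMap.dualMap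
            ((A j - μ j • 1 : Module.End ℂ V) : V →ₗ[ℂ] V))) ≤ r) :
    ∃ B : Submodule ℂ V, Module.finrank ℂ B = r ∧
      Submodule.span ℂ
        {x : V | ∃ a ∈ Algebra.adjoin ℂ (Set.range A), ∃ b ∈ B, a b = x} = ⊤ := by
  classical
  set n := finrank ℂ V with hn
  set E : (Fin m → ℂ) → Submodule ℂ (Module.Dual ℂ V) :=
    fun μ => ⨅ j, LinearMap.ker (LinearMap.dualMap
      ((A j - μ j • 1 : Module.End ℂ V) : V →ₗ[ℂ] V)) with hE
  have hkey : ∀ (μ : Fin m → ℂ) (j : Fin m) (p : Module.Dual ℂ V),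
      (LinearMap.dualMap ((A j - μ j • 1 : Module.End ℂ V) : V →ₗ[ℂ] V)) p
        = (A j).dualMap p - μ j • p := by
    intro μ j p
    ext v
    simp [LinearMap.dualMap_apply]
  have hEmem : ∀ (μ : Fin m → ℂ) (p : Module.Dual ℂ V),
      p ∈ E μ ↔ ∀ j, (A j).dualMap p = μ j • p := by
    intro μ p
    rw [hE]
    simp only [Submodule.mem_iInf, mem_ker, hkey, sub_eq_zero]
  have hfin : {μ : Fin m → ℂ | E μ ≠ ⊥}.Finite := by
    apply Set.Finite.subset (Set.Finite.pi
      (fun j => Module.End.finite_hasEigenvalue ((A j).dualMap : Module.End ℂ (Module.Dual ℂ V))))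
    intro μ hμ
    simp only [Set.mem_pi, Set.mem_univ, forall_true_left]
    intro j
    obtain ⟨p, hp, hp0⟩ := Submodule.exists_mem_ne_zero_of_ne_bot hμ
    exact Module.End.hasEigenvalue_of_hasEigenvector
      ⟨Module.End.mem_eigenspace_iff.mpr ((hEmem μ p).mp hp j), hp0⟩
  set s : Finset (Submodule ℂ (Module.Dual ℂ V)) := (hfin.image E).toFinset with hsdef
  have hsE : ∀ F ∈ s, finrank ℂ F ≤ r := by
    intro F hF
    rcases (Set.Finite.mem_toFinset _).mp hF with ⟨μ, _, rfl⟩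
    exact hrank μ
  have hn' : (n - r) + r ≤ finrank ℂ (Module.Dual ℂ V) := by
    rw [Subspace.dual_finrank_eq]
    omega
  obtain ⟨C, hCfr, hCint⟩ := generic s r hsE (n - r) hn'
  have hCE : ∀ μ : Fin m → ℂ, C ⊓ E μ = ⊥ := by
    intro μ
    by_cases h : E μ = ⊥
    · rw [h, inf_bot_eq]
    · exact hCint (E μ) ((Set.Finite.mem_toFinset _).mpr ⟨μ, h, rfl⟩)
  set B := C.dualCoannihilator with hB
  have hBfr : finrank ℂ B = r := by
    have h1 : finrank ℂ C + finrank ℂ B = finrank ℂ V :=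
      Subspace.finrank_add_finrank_dualCoannihilator_eq C
    rw [hCfr] at h1
    omega
  have hBann : B.dualAnnihilator = C := Subspace.dualCoannihilator_dualAnnihilator_eq
  refine ⟨B, hBfr, ?_⟩
  by_contra hWtop
  set S : Set V := {x | ∃ a ∈ Algebra.adjoin ℂ (Set.range A), ∃ b ∈ B, a b = x} with hS
  set W : Submodule ℂ V := Submodule.span ℂ S with hWdef
  have hBW : B ≤ W := fun b hb =>
    Submodule.subset_span ⟨1, Subalgebra.one_mem _, b, hb, by simp⟩
  have hAinv : ∀ j, ∀ w ∈ W, (A j) w ∈ W := by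
    intro j w hw
    have hmap : W.map (A j) ≤ W := by
      rw [hWdef, Submodule.map_span, Submodule.span_le]
      rintro _ ⟨x, ⟨a, ha, b, hb, rfl⟩, rfl⟩
      exact Submodule.subset_span
        ⟨(A j) * a, Subalgebra.mul_mem _ (Algebra.subset_adjoin ⟨j, rfl⟩) ha, b, hb, rfl⟩
    exact hmap ⟨w, hw, rfl⟩
  set Uann : Submodule ℂ (Module.Dual ℂ V) := W.dualAnnihilator with hUann
  have hUne : Uann ≠ ⊥ := fun h => hWtop (by
    apply Subspace.dualAnnihilator_inj.mp
    rw [hUann] at h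
    rw [h, Submodule.dualAnnihilator_top])
  have hUC : Uann ≤ C := by
    rw [← hBann]
    exact Submodule.dualAnnihilator_anti hBW
  -- stabilizer Lie subalgebra of W
  set St : LieSubalgebra ℂ (Module.End ℂ V) :=
    { carrier := {X : Module.End ℂ V | ∀ w ∈ W, X w ∈ W}
      add_mem' := fun {a b} ha hb w hw => by
        simp only [LinearMap.add_apply]
        exact Submodule.add_mem _ (ha w hw) (hb w hw)
      zero_mem' := fun w hw => by simp
      smul_mem' := fun c X hX w hw => by
        simp only [LinearMap.smul_apply]
        exact Submodule.smul_mem _ _ (hX w hw)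
      lie_mem' := fun {X Y} hX hY w hw => by
        rw [lie_apply']
        exact Submodule.sub_mem _ (hX _ (hY w hw)) (hY _ (hX w hw)) } with hSt
  set L0 := LieSubalgebra.lieSpan ℂ (Module.End ℂ V) (Set.range A) with hL0
  have hL0St : L0 ≤ St := by
    rw [hL0]
    apply LieSubalgebra.lieSpan_le.mpr
    rintro _ ⟨j, rfl⟩
    exact hAinv j
  have hdualinv : ∀ X : Module.End ℂ V, X ∈ St →
      ∀ p : Module.Dual ℂ V, p ∈ Uann → -(X.dualMap p) ∈ Uann := by
    intro X hX p hp
    apply Submodule.neg_mem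
    rw [hUann, Submodule.mem_dualAnnihilator] at hp ⊢
    intro w hw
    rw [LinearMap.dualMap_apply]
    exact hp _ (hX w hw)
  haveI := hsolv
  haveI : Nontrivial ↥Uann := Submodule.nontrivial_iff_ne_bot.mpr hUne
  -- the restriction Lie algebra morphism
  set ψfun : ↥L0 → Module.End ℂ ↥Uann := fun X =>
    (-((X : Module.End ℂ V).dualMap)).restrict
      (p := Uann) (q := Uann)
      (fun p hp => by
        simpa using hdualinv (X : Module.End ℂ V) (hL0St X.2) p hp) with hψfun
  have hψcoe : ∀ (X : ↥L0) (p : ↥Uann) (v : V),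
      ((ψfun X p : Module.Dual ℂ V)) v = -((p : Module.Dual ℂ V) ((X : Module.End ℂ V) v)) := by
    intro X p v
    rw [hψfun]
    simp [restrict_coe_apply, LinearMap.dualMap_apply]
  have endext : ∀ (F G : Module.End ℂ ↥Uann),
      (∀ (p : ↥Uann) (v : V), ((F p : ↥Uann) : Module.Dual ℂ V) v
        = ((G p : ↥Uann) : Module.Dual ℂ V) v) → F = G := by
    intro F G h
    apply LinearMap.ext
    intro p
    apply Subtype.ext
    apply LinearMap.ext
    intro v
    exact h p v
  set ψ : ↥L0 →ₗ⁅ℂ⁆ Module.End ℂ ↥Uann :=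
    { toFun := ψfun
      map_add' := fun X Y => endext _ _ (fun p v => by
        have h1 : ((X + Y : ↥L0) : Module.End ℂ V) = (X : Module.End ℂ V) + Y := rfl
        have hr : ((((ψfun X + ψfun Y) p : ↥Uann)) : Module.Dual ℂ V) v
            = ((ψfun X p : ↥Uann) : Module.Dual ℂ V) v
              + ((ψfun Y p : ↥Uann) : Module.Dual ℂ V) v := rfl
        rw [hr, hψcoe, hψcoe, hψcoe, h1]
        simp
        ring)
      map_smul' := fun c X => endext _ _ (fun p v => by
        show ((ψfun (c • X) p : ↥Uann) : Module.Dual ℂ V) v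
          = (((c • ψfun X : Module.End ℂ ↥Uann) p : ↥Uann) : Module.Dual ℂ V) v
        have h1 : ((c • X : ↥L0) : Module.End ℂ V) = c • (X : Module.End ℂ V) := rfl
        have hr : (((c • ψfun X : Module.End ℂ ↥Uann) p : ↥Uann) : Module.Dual ℂ V) v
            = c • ((ψfun X p : ↥Uann) : Module.Dual ℂ V) v := rfl
        rw [hr, hψcoe, hψcoe, h1]
        simp [mul_comm]
        try ring)
      map_lie' := fun {X Y} => endext _ _ (fun p v => by
        have h1 : ((⁅X, Y⁆ : ↥L0) : Module.End ℂ V)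
            = ⁅(X : Module.End ℂ V), (Y : Module.End ℂ V)⁆ :=
          LieSubalgebra.coe_bracket _ _ _
        have h2 : (⁅ψfun X, ψfun Y⁆ : Module.End ℂ ↥Uann) p
            = ψfun X (ψfun Y p) - ψfun Y (ψfun X p) := by rw [lie_apply']
        rw [h2]
        have h3 : ((ψfun X (ψfun Y p) - ψfun Y (ψfun X p) : ↥Uann) : Module.Dual ℂ V) v
            = ((ψfun X (ψfun Y p) : ↥Uann) : Module.Dual ℂ V) v
              - ((ψfun Y (ψfun X p) : ↥Uann) : Module.Dual ℂ V) v := rfl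
        rw [h3]
        simp only [hψcoe, h1, lie_apply', map_sub, map_neg]
        ring) } with hψ
  haveI hsolvL0 : LieAlgebra.IsSolvable ↥L0 := hsolv
  haveI : LieAlgebra.IsSolvable ↥ψ.range := ψ.isSolvable_range
  obtain ⟨p', hp'0, heig⟩ := lie_thm ↥Uann _ ψ.range rfl inferInstance
  have hch : ∀ j : Fin m, ∃ c : ℂ,
      (A j).dualMap (p' : Module.Dual ℂ V) = c • (p' : Module.Dual ℂ V) := by
    intro j
    have hAj : A j ∈ L0 := by
      rw [hL0]
      exact LieSubalgebra.subset_lieSpan ⟨j, rfl⟩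
    obtain ⟨c, hc⟩ := heig (ψ ⟨A j, hAj⟩) ⟨⟨A j, hAj⟩, rfl⟩
    refine ⟨-c, ?_⟩
    have h1 := congrArg (Subtype.val) hc
    have h2 : ((ψ ⟨A j, hAj⟩ p' : ↥Uann) : Module.Dual ℂ V)
        = -((A j).dualMap (p' : Module.Dual ℂ V)) := by
      apply LinearMap.ext
      intro v
      rw [show (ψ ⟨A j, hAj⟩ : Module.End ℂ ↥Uann) = ψfun ⟨A j, hAj⟩ from rfl]
      rw [hψcoe]
      simp [LinearMap.dualMap_apply]
    rw [h2] at h1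
    have h3 : ((c • p' : ↥Uann) : Module.Dual ℂ V) = c • (p' : Module.Dual ℂ V) := rfl
    rw [h3] at h1
    rw [neg_smul, ← h1]
    simp
  set μ : Fin m → ℂ := fun j => (hch j).choose with hμdef
  have hpE : (p' : Module.Dual ℂ V) ∈ E μ := by
    rw [hEmem]
    intro j
    exact (hch j).choose_spec
  have hpC : (p' : Module.Dual ℂ V) ∈ C := hUC p'.2
  have : (p' : Module.Dual ℂ V) ∈ C ⊓ E μ := Submodule.mem_inf.mpr ⟨hpC, hpE⟩
  rw [hCE μ] at this
  exact hp'0 (Subtype.ext (by simpa using this))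
end

section
/- Let A₁, …, A_m ∈ End(V), dim V = n over ℂ, generate a commutative unital associative algebra 𝔄. Then 𝔄 has a cyclic r-dimensional subspace if and only if for every (μ₁, …, μ_m) ∈ ℂ^m the space of covectors p ∈ V* with p ∘ (A_j − μ_j I) = 0 for all j has dimension at most r. -/
set_option linter.unusedSectionVars false

open Module Submodule LinearMap

section Aux
variable {V : Type*} [AddCommGroup V] [Module ℂ V] [FiniteDimensional ℂ V]

lemma auxDual (W : Submodule ℂ V) (r : ℕ) :
    finrank ℂ W.dualAnnihilator ≤ r ↔ finrank ℂ V ≤ r + finrank ℂ W := by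
  have h1 : finrank ℂ (V ⧸ W) = finrank ℂ W.dualAnnihilator :=
    (Subspace.quotEquivAnnihilator W).finrank_eq
  have h2 := W.finrank_quotient_add_finrank
  omega

omit [FiniteDimensional ℂ V] in
lemma auxKer (m : ℕ) (A : Fin m → Module.End ℂ V) (μ : Fin m → ℂ) :
    (⨅ j, LinearMap.ker (LinearMap.dualMap
        ((A j - μ j • 1 : Module.End ℂ V) : V →ₗ[ℂ] V))) =
      (⨆ j, LinearMap.range ((A j - μ j • 1 : Module.End ℂ V) : V →ₗ[ℂ] V)).dualAnnihilator := by
  simp_rw [LinearMap.ker_dualMap_eq_dualAnnihilator_range, Submodule.dualAnnihilator_iSup_eq]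

end Aux

section Fwd
variable {V : Type*} [AddCommGroup V] [Module ℂ V]

lemma commSub (m : ℕ) (A : Fin m → Module.End ℂ V) (hcomm : ∀ i j, Commute (A i) (A j))
    (i j : Fin m) (a b : ℂ) :
    Commute (A i - a • (1 : Module.End ℂ V)) (A j - b • 1) :=
  ((hcomm i j).sub_right ((Commute.one_right (A i)).smul_right b)).sub_left
    ((Commute.one_left _).smul_left a)

lemma memAdjoin_sub_smul_one (m : ℕ) (A : Fin m → Module.End ℂ V) (j : Fin m) (c : ℂ) :
    (A j - c • 1 : Module.End ℂ V) ∈ Algebra.adjoin ℂ (Set.range A) := by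
  refine sub_mem (Algebra.subset_adjoin ⟨j, rfl⟩) ?_
  have : (c • 1 : Module.End ℂ V) = algebraMap ℂ _ c := by
    ext v; simp [Module.algebraMap_end_apply]
  rw [this]; exact algebraMap_mem _ c

lemma map_le_range (f g : Module.End ℂ V) (h : Commute f g) :
    Submodule.map f (LinearMap.range g) ≤ LinearMap.range g := by
  rw [← LinearMap.range_comp, ← Module.End.mul_eq_comp, h.eq, Module.End.mul_eq_comp]
  exact LinearMap.range_comp_le_range _ _

lemma adjoin_maps_W (m : ℕ) (A : Fin m → Module.End ℂ V) (hcomm : ∀ i j, Commute (A i) (A j))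
    (μ : Fin m → ℂ) :
    ∀ a ∈ Algebra.adjoin ℂ (Set.range A),
      ∀ w ∈ (⨆ j, LinearMap.range (A j - μ j • 1 : Module.End ℂ V)),
        a w ∈ (⨆ j, LinearMap.range (A j - μ j • 1 : Module.End ℂ V)) := by
  set W := ⨆ j, LinearMap.range (A j - μ j • 1 : Module.End ℂ V) with hW
  intro a ha
  induction ha using Algebra.adjoin_induction with
  | mem x hx =>
    obtain ⟨i, rfl⟩ := hx
    intro w hw
    have hmap : Submodule.map (A i) W ≤ W := by
      rw [hW, Submodule.map_iSup]
      refine iSup_le fun j => le_trans (map_le_range _ _ ?_)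
        (le_iSup (fun j => LinearMap.range (A j - μ j • 1 : Module.End ℂ V)) j)
      exact (hcomm i j).sub_right ((Commute.one_right (A i)).smul_right (μ j))
    exact hmap (Submodule.mem_map_of_mem hw)
  | algebraMap r =>
    intro w hw; simpa [Module.algebraMap_end_apply] using Submodule.smul_mem _ r hw
  | add x y hx hy ihx ihy =>
    intro w hw; simpa [LinearMap.add_apply] using add_mem (ihx w hw) (ihy w hw)
  | mul x y hx hy ihx ihy =>
    intro w hw
    have := ihx _ (ihy w hw)
    simpa [Module.End.mul_apply] using this

lemma adjoin_scalar_mod (m : ℕ) (A : Fin m → Module.End ℂ V)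
    (hcomm : ∀ i j, Commute (A i) (A j)) (μ : Fin m → ℂ) :
    ∀ a ∈ Algebra.adjoin ℂ (Set.range A), ∃ c : ℂ,
      ∀ v : V, a v - c • v ∈ (⨆ j, LinearMap.range (A j - μ j • 1 : Module.End ℂ V)) := by
  set W := ⨆ j, LinearMap.range (A j - μ j • 1 : Module.End ℂ V) with hW
  intro a ha
  induction ha using Algebra.adjoin_induction with
  | mem x hx =>
    obtain ⟨i, rfl⟩ := hx
    refine ⟨μ i, fun v => ?_⟩
    have : A i v - μ i • v = (A i - μ i • 1 : Module.End ℂ V) v := by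
      simp [LinearMap.sub_apply]
    rw [this]
    exact le_iSup (fun j => LinearMap.range (A j - μ j • 1 : Module.End ℂ V)) i ⟨v, rfl⟩
  | algebraMap r =>
    exact ⟨r, fun v => by simp [Module.algebraMap_end_apply]⟩
  | add x y hx hy ihx ihy =>
    obtain ⟨c₁, h₁⟩ := ihx; obtain ⟨c₂, h₂⟩ := ihy
    refine ⟨c₁ + c₂, fun v => ?_⟩
    have : (x + y) v - (c₁ + c₂) • v = (x v - c₁ • v) + (y v - c₂ • v) := by
      simp [LinearMap.add_apply, add_smul]; abel
    rw [this]; exact add_mem (h₁ v) (h₂ v)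
  | mul x y hx hy ihx ihy =>
    obtain ⟨c₁, h₁⟩ := ihx; obtain ⟨c₂, h₂⟩ := ihy
    refine ⟨c₁ * c₂, fun v => ?_⟩
    have : (x * y) v - (c₁ * c₂) • v = x (y v - c₂ • v) + c₂ • (x v - c₁ • v) := by
      simp [Module.End.mul_apply, map_sub, map_smul, smul_sub, smul_smul, mul_comm]
    rw [this]
    exact add_mem (adjoin_maps_W m A hcomm μ x hx _ (h₂ v)) (Submodule.smul_mem _ _ (h₁ v))

end Fwd

section Bwd
variable {V : Type*} [AddCommGroup V] [Module ℂ V]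

lemma map_pow_le (N : Module.End ℂ V) (Y : Submodule ℂ V) (hY : Submodule.map N Y ≤ Y) :
    ∀ k, Submodule.map (N ^ k) Y ≤ Y := by
  intro k
  induction k with
  | zero => simp [pow_zero, Module.End.one_eq_id]
  | succ k ih =>
    rw [pow_succ', Module.End.mul_eq_comp, Submodule.map_comp]
    exact le_trans (Submodule.map_mono ih) hY

lemma nakayama (m : ℕ) (N : Fin m → Module.End ℂ V) (hNc : ∀ i j, Commute (N i) (N j))
    (n : ℕ) (X P : Submodule ℂ V)
    (hXinv : ∀ j, Submodule.map (N j) X ≤ X)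
    (hPinv : ∀ j, Submodule.map (N j) P ≤ P)
    (hnil : ∀ j, ∀ x ∈ X, (N j ^ n) x = 0)
    (h : X ≤ P ⊔ ⨆ j, Submodule.map (N j) X) : X ≤ P := by
  classical
  suffices H : ∀ s : Finset (Fin m), X ≤ P ⊔ ⨆ j ∈ s, Submodule.map (N j) X → X ≤ P by
    refine H Finset.univ ?_
    simpa using h
  intro s
  induction s using Finset.induction_on with
  | empty => intro h'; simpa using h'
  | @insert j₀ s hj₀ ih =>
    intro h'
    rw [Finset.iSup_insert] at h'
    set T := ⨆ j ∈ s, Submodule.map (N j) X with hT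
    have hTle : ∀ k : ℕ, Submodule.map (N j₀ ^ k) T ≤ T := by
      intro k
      rw [hT, Submodule.map_iSup]
      refine iSup_le fun j => ?_
      rw [Submodule.map_iSup]
      refine iSup_le fun hj => ?_
      have hcom : (N j₀ ^ k) * N j = N j * (N j₀ ^ k) := ((hNc j j₀).pow_right k).symm.eq
      have : Submodule.map (N j₀ ^ k) (Submodule.map (N j) X) ≤ Submodule.map (N j) X := by
        rw [← Submodule.map_comp, ← Module.End.mul_eq_comp, hcom, Module.End.mul_eq_comp,
          Submodule.map_comp]
        exact Submodule.map_mono (map_pow_le _ _ (hXinv j₀) k)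
      exact le_trans this (le_biSup (fun j => Submodule.map (N j) X) hj)
    have key : ∀ k : ℕ, X ≤ P ⊔ (Submodule.map (N j₀ ^ k) X ⊔ T) := by
      intro k
      induction k with
      | zero =>
        simp only [pow_zero, Module.End.one_eq_id, Submodule.map_id]
        exact le_sup_of_le_right le_sup_left
      | succ k ihk =>
        have hmk : Submodule.map (N j₀ ^ k) X ≤
            P ⊔ (Submodule.map (N j₀ ^ (k + 1)) X ⊔ T) := by
          refine le_trans (Submodule.map_mono h') ?_
          rw [Submodule.map_sup, Submodule.map_sup]
          have e1 : Submodule.map (N j₀ ^ k) P ≤ P := map_pow_le _ _ (hPinv j₀) k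
          have e2 : Submodule.map (N j₀ ^ k) (Submodule.map (N j₀) X) =
              Submodule.map (N j₀ ^ (k + 1)) X := by
            rw [← Submodule.map_comp, ← Module.End.mul_eq_comp, ← pow_succ]
          rw [e2]
          exact sup_le (le_sup_of_le_left e1)
            (sup_le (le_sup_of_le_right le_sup_left)
              (le_sup_of_le_right (le_sup_of_le_right (hTle k))))
        refine le_trans ihk (sup_le le_sup_left (sup_le hmk ?_))
        exact le_sup_of_le_right le_sup_right
    have hbot : Submodule.map (N j₀ ^ n) X = ⊥ := by
      rw [Submodule.eq_bot_iff]
      rintro y ⟨x, hx, rfl⟩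
      exact hnil j₀ x hx
    refine ih ?_
    have := key n
    rwa [hbot, bot_sup_eq] at this

lemma noncommProd_props {ι : Type*} [DecidableEq ι] (s : Finset ι) (F : ι → Module.End ℂ V)
    (hFc : ∀ i j, Commute (F i) (F j)) (X : Submodule ℂ V)
    (hmap : ∀ i ∈ s, ∀ x ∈ X, F i x ∈ X) (hinj : ∀ i ∈ s, ∀ x ∈ X, F i x = 0 → x = 0) :
    (∀ x ∈ X, (s.noncommProd F (Set.pairwise_of_forall _ _ fun a b => hFc a b)) x ∈ X) ∧
      (∀ x ∈ X, (s.noncommProd F (Set.pairwise_of_forall _ _ fun a b => hFc a b)) x = 0 →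
        x = 0) := by
  classical
  induction s using Finset.induction_on with
  | empty =>
    exact ⟨fun x hx => by rw [Finset.noncommProd_empty]; exact hx,
      fun x hx h => by rw [Finset.noncommProd_empty] at h; exact h⟩
  | @insert a s ha ih =>
    obtain ⟨ih1, ih2⟩ := ih (fun i hi => hmap i (Finset.mem_insert_of_mem hi))
      (fun i hi => hinj i (Finset.mem_insert_of_mem hi))
    rw [Finset.noncommProd_insert_of_notMem _ _ _ _ ha]
    constructor
    · intro x hx
      rw [Module.End.mul_apply]
      exact hmap a (Finset.mem_insert_self a s) _ (ih1 x hx)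
    · intro x hx hx0
      rw [Module.End.mul_apply] at hx0
      exact ih2 x hx (hinj a (Finset.mem_insert_self a s) _ (ih1 x hx) hx0)

end Bwd

section Bwd2
variable {V : Type*} [AddCommGroup V] [Module ℂ V] [FiniteDimensional ℂ V]

lemma exists_superset_finrank (B₀ : Submodule ℂ V) (r : ℕ) (h1 : finrank ℂ B₀ ≤ r)
    (h2 : r ≤ finrank ℂ V) : ∃ B : Submodule ℂ V, B₀ ≤ B ∧ finrank ℂ B = r := by
  obtain ⟨k, hk⟩ : ∃ k, k = r - finrank ℂ B₀ := ⟨_, rfl⟩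
  induction k generalizing B₀ with
  | zero => exact ⟨B₀, le_rfl, by omega⟩
  | succ k ih =>
    have hlt : finrank ℂ B₀ < r := by omega
    have hne : B₀ ≠ ⊤ := by
      intro h
      rw [h, finrank_top] at hlt
      omega
    obtain ⟨x, -, hx⟩ := SetLike.exists_of_lt ((lt_top_iff_ne_top (a := B₀)).mpr hne)
    have hx0 : x ≠ 0 := fun h => hx (h ▸ B₀.zero_mem)
    have hdisj : B₀ ⊓ (ℂ ∙ x) = ⊥ := by
      rw [Submodule.eq_bot_iff]
      rintro y ⟨hy1, hy2⟩
      obtain ⟨c, rfl⟩ := Submodule.mem_span_singleton.mp hy2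
      rcases eq_or_ne c 0 with rfl | hc
      · simp
      · exact absurd ((B₀.smul_mem_iff hc).mp hy1) hx
    have hrank : finrank ℂ ↥(B₀ ⊔ (ℂ ∙ x)) = finrank ℂ B₀ + 1 := by
      have := Submodule.finrank_sup_add_finrank_inf_eq B₀ (ℂ ∙ x)
      rw [hdisj, finrank_bot, finrank_span_singleton hx0] at this
      omega
    obtain ⟨B, hB1, hB2⟩ := ih (B₀ ⊔ (ℂ ∙ x)) (by omega) (by omega)
    exact ⟨B, le_trans le_sup_left hB1, hB2⟩

lemma exists_fin_span (U : Submodule ℂ V) (r : ℕ) (h : finrank ℂ U ≤ r) :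
    ∃ u : Fin r → V, (∀ t, u t ∈ U) ∧ U ≤ Submodule.span ℂ (Set.range u) := by
  set d := finrank ℂ U with hd
  let bas : Basis (Fin d) ℂ U := Module.finBasis ℂ U
  refine ⟨fun t => if h' : (t : ℕ) < d then (bas ⟨t, h'⟩ : V) else 0, fun t => ?_, ?_⟩
  · by_cases h' : (t : ℕ) < d
    · simp only [dif_pos h']; exact (bas ⟨t, h'⟩).2
    · simp only [dif_neg h']; exact U.zero_mem
  · intro x hx
    have : (⟨x, hx⟩ : U) ∈ Submodule.span ℂ (Set.range bas) := by
      rw [bas.span_eq]; trivial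
    have hmem : x ∈ Submodule.map U.subtype (Submodule.span ℂ (Set.range bas)) :=
      ⟨⟨x, hx⟩, this, rfl⟩
    rw [Submodule.map_span, ← Set.range_comp] at hmem
    refine Submodule.span_mono ?_ hmem
    rintro - ⟨i, rfl⟩
    refine ⟨⟨(i : ℕ), lt_of_lt_of_le i.2 h⟩, ?_⟩
    simp only [Function.comp_apply]
    rw [dif_pos (show ((⟨(i : ℕ), lt_of_lt_of_le i.2 h⟩ : Fin r) : ℕ) < d from i.2)]
    congr 1

lemma finrank_span_fin_le (r : ℕ) (b : Fin r → V) :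
    finrank ℂ (Submodule.span ℂ (Set.range b)) ≤ r := by
  classical
  have := finrank_span_le_card (R := ℂ) (Set.range b)
  refine le_trans this ?_
  rw [Set.toFinset_range]
  exact le_trans Finset.card_image_le (by simp)

end Bwd2

theorem stmt_7 (V : Type*) [AddCommGroup V] [Module ℂ V] [FiniteDimensional ℂ V]
    (m r : ℕ) (hr : r ≤ Module.finrank ℂ V) (A : Fin m → Module.End ℂ V)
    (hcomm : ∀ i j, Commute (A i) (A j)) :
    (∃ B : Submodule ℂ V, Module.finrank ℂ B = r ∧
        Submodule.span ℂ
          {x : V | ∃ a ∈ Algebra.adjoin ℂ (Set.range A), ∃ b ∈ B, a b = x} = ⊤) ↔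
      (∀ μ : Fin m → ℂ,
        Module.finrank ℂ
          ↥(⨅ j, LinearMap.ker (LinearMap.dualMap
              ((A j - μ j • 1 : Module.End ℂ V) : V →ₗ[ℂ] V))) ≤ r) := by
  classical
  have hcond : ∀ μ : Fin m → ℂ,
      (finrank ℂ ↥(⨅ j, LinearMap.ker (LinearMap.dualMap
          ((A j - μ j • 1 : Module.End ℂ V) : V →ₗ[ℂ] V))) ≤ r ↔
        finrank ℂ V ≤ r + finrank ℂ
          ↥(⨆ j, LinearMap.range (A j - μ j • 1 : Module.End ℂ V))) := by
    intro μ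
    rw [auxKer m A μ, auxDual]
  constructor
  · rintro ⟨B, hBr, hBspan⟩ μ
    rw [hcond μ]
    set W := ⨆ j, LinearMap.range (A j - μ j • 1 : Module.End ℂ V) with hW
    have hle : (⊤ : Submodule ℂ V) ≤ W ⊔ B := by
      rw [← hBspan]
      refine Submodule.span_le.mpr ?_
      rintro x ⟨a, ha, bb, hbb, rfl⟩
      obtain ⟨c, hc⟩ := adjoin_scalar_mod m A hcomm μ a ha
      have hrw : a bb = (a bb - c • bb) + c • bb := by abel
      rw [hrw]
      exact Submodule.add_mem _ (Submodule.mem_sup_left (hc bb))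
        (Submodule.mem_sup_right (B.smul_mem c hbb))
    have h1 : finrank ℂ V = finrank ℂ ↥(W ⊔ B) := by
      rw [top_unique hle, finrank_top]
    have h2 := Submodule.finrank_sup_add_finrank_inf_eq W B
    omega
  · intro h
    set n := finrank ℂ V with hn
    have hcond' : ∀ μ : Fin m → ℂ, finrank ℂ V ≤ r + finrank ℂ
        ↥(⨆ j, LinearMap.range (A j - μ j • 1 : Module.End ℂ V)) :=
      fun μ => (hcond μ).mp (h μ)
    set Vχ : (Fin m → ℂ) → Submodule ℂ V :=
      fun χ => ⨅ i, (A i).maxGenEigenspace (χ i) with hVχ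
    have hdecomp : ⨆ χ, Vχ χ = ⊤ :=
      Module.End.iSup_iInf_maxGenEigenspace_eq_top_of_iSup_maxGenEigenspace_eq_top_of_commute A
        (fun i j _ => hcomm i j) (fun i => Module.End.iSup_maxGenEigenspace_eq_top (A i))
    have hindep : iSupIndep Vχ :=
      Module.End.independent_iInf_maxGenEigenspace_of_forall_mapsTo A
        (fun i j φ => Module.End.mapsTo_maxGenEigenspace_of_comm (hcomm j i) φ)
    have hVinv : ∀ χ i, ∀ x ∈ Vχ χ, A i x ∈ Vχ χ := by
      intro χ i x hx
      rw [hVχ, Submodule.mem_iInf] at hx ⊢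
      intro j
      exact Module.End.mapsTo_maxGenEigenspace_of_comm (hcomm j i) (χ j) (hx j)
    have hNinv : ∀ χ i (c : ℂ), Submodule.map (A i - c • 1 : Module.End ℂ V) (Vχ χ) ≤ Vχ χ := by
      rintro χ i c y ⟨x, hx, rfl⟩
      rw [LinearMap.sub_apply, LinearMap.smul_apply, Module.End.one_apply]
      exact sub_mem (hVinv χ i x hx) (Submodule.smul_mem _ _ hx)
    have hnil : ∀ χ i, ∀ x ∈ Vχ χ, ((A i - χ i • 1 : Module.End ℂ V) ^ n) x = 0 := by
      intro χ i x hx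
      have hx' : x ∈ (A i).maxGenEigenspace (χ i) := by
        rw [hVχ, Submodule.mem_iInf] at hx; exact hx i
      rw [Module.End.maxGenEigenspace_eq_genEigenspace_finrank, ← hn,
        Module.End.genEigenspace_nat, LinearMap.mem_ker] at hx'
      exact hx'
    set M1 : (Fin m → ℂ) → Submodule ℂ V :=
      fun χ => ⨆ j, Submodule.map (A j - χ j • 1 : Module.End ℂ V) (Vχ χ) with hM1
    have hM1le : ∀ χ, M1 χ ≤ Vχ χ := fun χ => iSup_le fun j => hNinv χ j (χ j)
    have hdim : ∀ χ, finrank ℂ ↥(Vχ χ) ≤ r + finrank ℂ ↥(M1 χ) := by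
      intro χ
      set W := ⨆ j, LinearMap.range (A j - χ j • 1 : Module.End ℂ V) with hW
      have hWM : W ⊓ Vχ χ ≤ M1 χ := by
        have hsub : W ≤ M1 χ ⊔ (⨆ ψ, ⨆ (_ : ψ ≠ χ), Vχ ψ) := by
          rw [hW]
          refine iSup_le fun j => ?_
          have hrange : LinearMap.range (A j - χ j • 1 : Module.End ℂ V) =
              Submodule.map (A j - χ j • 1 : Module.End ℂ V) ⊤ := (Submodule.map_top _).symm
          rw [hrange, ← hdecomp, Submodule.map_iSup]
          refine iSup_le fun ψ => ?_
          rcases eq_or_ne ψ χ with rfl | hψ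
          · exact le_sup_of_le_left
              (le_iSup (fun j => Submodule.map (A j - ψ j • 1 : Module.End ℂ V) (Vχ ψ)) j)
          · exact le_sup_of_le_right (le_trans (hNinv ψ j (χ j)) (le_biSup _ hψ))
        have hdisj : (⨆ ψ, ⨆ (_ : ψ ≠ χ), Vχ ψ) ⊓ Vχ χ = ⊥ := by
          rw [inf_comm]
          exact (hindep χ).eq_bot
        calc W ⊓ Vχ χ ≤ (M1 χ ⊔ (⨆ ψ, ⨆ (_ : ψ ≠ χ), Vχ ψ)) ⊓ Vχ χ :=
              inf_le_inf_right _ hsub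
          _ = M1 χ ⊔ ((⨆ ψ, ⨆ (_ : ψ ≠ χ), Vχ ψ) ⊓ Vχ χ) :=
              sup_inf_assoc_of_le _ (hM1le χ)
          _ = M1 χ := by rw [hdisj, sup_bot_eq]
      have h2 := Submodule.finrank_sup_add_finrank_inf_eq (Vχ χ) W
      have h3 : finrank ℂ ↥(Vχ χ ⊔ W) ≤ finrank ℂ V := Submodule.finrank_le _
      have h4 : finrank ℂ ↥(Vχ χ ⊓ W) ≤ finrank ℂ ↥(M1 χ) := by
        refine Submodule.finrank_mono ?_
        rw [inf_comm]
        exact hWM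
      have h5 := hcond' χ
      rw [← hW] at h5
      omega
    have hu : ∀ χ : Fin m → ℂ, ∃ u : Fin r → V, (∀ t, u t ∈ Vχ χ) ∧
        Vχ χ ≤ Submodule.span ℂ (Set.range u) ⊔ M1 χ := by
      intro χ
      obtain ⟨q, hq⟩ := Submodule.exists_isCompl (Submodule.comap (Vχ χ).subtype (M1 χ))
      set U := Submodule.map (Vχ χ).subtype q with hU
      have hUle : U ≤ Vχ χ := Submodule.map_subtype_le _ _
      have hUsup : U ⊔ M1 χ = Vχ χ := by
        have hmap : Submodule.map (Vχ χ).subtype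
            (q ⊔ Submodule.comap (Vχ χ).subtype (M1 χ)) = Vχ χ := by
          rw [sup_comm, codisjoint_iff.mp hq.codisjoint, Submodule.map_top,
            Submodule.range_subtype]
        rw [Submodule.map_sup, Submodule.map_comap_subtype,
          inf_eq_right.mpr (hM1le χ)] at hmap
        exact hmap
      have hUfin : finrank ℂ U ≤ r := by
        have e1 : finrank ℂ U = finrank ℂ q := Submodule.finrank_map_subtype_eq _ _
        have e2 : finrank ℂ ↥(Submodule.comap (Vχ χ).subtype (M1 χ)) + finrank ℂ q =
            finrank ℂ ↥(Vχ χ) := Submodule.finrank_add_eq_of_isCompl hq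
        have e3 : finrank ℂ ↥(Submodule.comap (Vχ χ).subtype (M1 χ)) = finrank ℂ ↥(M1 χ) :=
          (Submodule.comapSubtypeEquivOfLe (hM1le χ)).finrank_eq
        have e4 := hdim χ
        omega
      obtain ⟨u, hu1, hu2⟩ := exists_fin_span U r hUfin
      exact ⟨u, fun t => hUle (hu1 t),
        le_trans (le_of_eq hUsup.symm) (sup_le_sup_right hu2 _)⟩
    choose u hu1 hu2 using hu
    have hfin : {χ : Fin m → ℂ | Vχ χ ≠ ⊥}.Finite := Submodule.finite_ne_bot_of_iSupIndep hindep
    set S : Finset (Fin m → ℂ) := hfin.toFinset with hS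
    set bvec : Fin r → V := fun t => ∑ χ ∈ S, u χ t with hbvec
    obtain ⟨B, hB₀B, hBr⟩ := exists_superset_finrank (Submodule.span ℂ (Set.range bvec)) r
      (finrank_span_fin_le r bvec) hr
    refine ⟨B, hBr, ?_⟩
    rw [eq_top_iff]
    set P := Submodule.span ℂ {x : V | ∃ a ∈ Algebra.adjoin ℂ (Set.range A), ∃ b ∈ B, a b = x}
      with hP
    have hPmem : ∀ a ∈ Algebra.adjoin ℂ (Set.range A), ∀ x ∈ B, a x ∈ P :=
      fun a ha x hx => Submodule.subset_span ⟨a, ha, x, hx, rfl⟩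
    have hPinv : ∀ a ∈ Algebra.adjoin ℂ (Set.range A), ∀ x ∈ P, a x ∈ P := by
      intro a ha x hx
      have hmapP : Submodule.map a P ≤ P := by
        rw [hP, Submodule.map_span]
        refine Submodule.span_le.mpr ?_
        rintro - ⟨-, ⟨a', ha', b', hb', rfl⟩, rfl⟩
        exact Submodule.subset_span ⟨a * a', mul_mem ha ha', b', hb', rfl⟩
      exact hmapP ⟨x, hx, rfl⟩
    rw [← hdecomp]
    refine iSup_le fun χ => ?_
    by_cases hχS : χ ∈ S
    swap
    · have hbot : Vχ χ = ⊥ := by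
        rw [hS, Set.Finite.mem_toFinset, Set.mem_setOf_eq, not_not] at hχS
        exact hχS
      rw [hbot]
      exact bot_le
    · set F : (Fin m → ℂ) → Module.End ℂ V := fun ψ =>
        if hψ : ∃ j, ψ j ≠ χ j then (A hψ.choose - ψ hψ.choose • 1 : Module.End ℂ V) ^ n
        else 1 with hF
      have hFc : ∀ ψ ψ', Commute (F ψ) (F ψ') := by
        intro ψ ψ'
        rw [hF]
        by_cases h1 : ∃ j, ψ j ≠ χ j <;> by_cases h2 : ∃ j, ψ' j ≠ χ j <;>
          simp only [dif_pos, dif_neg, h1, h2]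
        · exact (commSub m A hcomm _ _ _ _).pow_pow n n
        · exact Commute.one_right _
        · exact Commute.one_left _
        · exact Commute.one_right _
      set Q : Module.End ℂ V := (S.erase χ).noncommProd F (fun a _ b _ _ => hFc a b) with hQ
      have hQmem : Q ∈ Algebra.adjoin ℂ (Set.range A) := by
        rw [hQ]
        refine Submonoid.noncommProd_mem
          (Algebra.adjoin ℂ (Set.range A)).toSubsemiring.toSubmonoid _ F _ (fun ψ hψ => ?_)
        rw [hF]
        by_cases h1 : ∃ j, ψ j ≠ χ j
        · simp only [dif_pos h1]
          exact pow_mem (memAdjoin_sub_smul_one m A _ _) n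
        · simp only [dif_neg h1]
          exact one_mem _
      have hQcommN : ∀ (i : Fin m) (c : ℂ), Commute Q (A i - c • 1 : Module.End ℂ V) := by
        intro i c
        refine (Finset.noncommProd_commute _ _ _ _ (fun ψ hψ => ?_)).symm
        rw [hF]
        by_cases h1 : ∃ j, ψ j ≠ χ j
        · simp only [dif_pos h1]
          exact ((commSub m A hcomm i _ c _).pow_right n)
        · simp only [dif_neg h1]
          exact Commute.one_right _
      have hQkill : ∀ ψ ∈ S.erase χ, ∀ x ∈ Vχ ψ, Q x = 0 := by
        intro ψ hψ x hx
        rw [hQ, ← Finset.noncommProd_erase_mul _ hψ F (fun a _ b _ _ => hFc a b),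
          Module.End.mul_apply]
        have hex : ∃ j, ψ j ≠ χ j :=
          Function.ne_iff.mp (Finset.mem_erase.mp hψ).1
        have hFψ : F ψ x = 0 := by
          rw [hF]
          simp only [dif_pos hex]
          have hx' : x ∈ (A hex.choose).maxGenEigenspace (ψ hex.choose) := by
            rw [hVχ, Submodule.mem_iInf] at hx; exact hx _
          rw [Module.End.maxGenEigenspace_eq_genEigenspace_finrank, ← hn,
            Module.End.genEigenspace_nat, LinearMap.mem_ker] at hx'
          exact hx'
        rw [hFψ, map_zero]
      obtain ⟨hQmap, hQinj⟩ := noncommProd_props (S.erase χ) F hFc (Vχ χ)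
        (by
          intro ψ hψ x hx
          rw [hF]
          by_cases h1 : ∃ j, ψ j ≠ χ j
          · simp only [dif_pos h1]
            exact map_pow_le _ _ (hNinv χ _ _) n ⟨x, hx, rfl⟩
          · simp only [dif_neg h1, Module.End.one_apply]
            exact hx)
        (by
          intro ψ hψ x hx hx0
          have hex : ∃ j, ψ j ≠ χ j :=
            Function.ne_iff.mp (Finset.mem_erase.mp hψ).1
          rw [hF] at hx0
          simp only [dif_pos hex] at hx0
          have hmem1 : x ∈ (A hex.choose).genEigenspace (ψ hex.choose) (n : ℕ∞) := by
            rw [Module.End.genEigenspace_nat, LinearMap.mem_ker]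
            exact hx0
          have hmem2 : x ∈ (A hex.choose).genEigenspace (χ hex.choose) (⊤ : ℕ∞) := by
            rw [hVχ, Submodule.mem_iInf] at hx
            exact hx _
          exact Submodule.disjoint_def.mp
            (Module.End.disjoint_genEigenspace (A hex.choose) hex.choose_spec _ _) x hmem1 hmem2)
      have hQmapsTo : ∀ x ∈ Vχ χ, Q x ∈ Vχ χ := hQmap
      have hQsurj : ∀ y ∈ Vχ χ, ∃ x ∈ Vχ χ, Q x = y := by
        have hres : Function.Injective (Q.restrict hQmapsTo) := by
          intro x y hxy
          have : Q ((x : V) - y) = 0 := by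
            have := congrArg (Subtype.val) hxy
            simp only [LinearMap.restrict_apply] at this
            rw [map_sub, this, sub_self]
          have hd := hQinj ((x : V) - y) (sub_mem x.2 y.2) this
          exact Subtype.ext (by rw [← sub_eq_zero]; exact hd)
        have hsurj := (LinearMap.injective_iff_surjective).mp hres
        intro y hy
        obtain ⟨x, hx⟩ := hsurj ⟨y, hy⟩
        refine ⟨x, x.2, ?_⟩
        have := congrArg Subtype.val hx
        simpa [LinearMap.restrict_apply] using this
      have hbB : ∀ t, bvec t ∈ B := fun t => hB₀B (Submodule.subset_span ⟨t, rfl⟩)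
      have hQu : ∀ t, Q (u χ t) ∈ P := by
        intro t
        have hsum : Q (bvec t) = Q (u χ t) := by
          rw [hbvec]
          simp only
          rw [map_sum, ← Finset.sum_erase_add S _ hχS]
          have hz : ∀ ψ ∈ S.erase χ, Q (u ψ t) = 0 := fun ψ hψ =>
            hQkill ψ hψ (u ψ t) (hu1 ψ t)
          rw [Finset.sum_congr rfl hz]
          simp
        rw [← hsum]
        exact hPmem Q hQmem (bvec t) (hbB t)
      have hmapQspan : Submodule.map Q (Submodule.span ℂ (Set.range (u χ))) ≤ P := by
        rw [Submodule.map_span]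
        refine Submodule.span_le.mpr ?_
        rintro - ⟨-, ⟨t, rfl⟩, rfl⟩
        exact hQu t
      have hmapQM1 : Submodule.map Q (M1 χ) ≤ M1 χ := by
        rw [hM1]
        simp only
        rw [Submodule.map_iSup]
        refine iSup_le fun j => ?_
        have hc : Q * (A j - χ j • 1 : Module.End ℂ V) =
            (A j - χ j • 1 : Module.End ℂ V) * Q := (hQcommN j (χ j)).eq
        rw [← Submodule.map_comp, ← Module.End.mul_eq_comp, hc, Module.End.mul_eq_comp,
          Submodule.map_comp]
        refine le_trans (Submodule.map_mono ?_)
          (le_iSup (fun j => Submodule.map (A j - χ j • 1 : Module.End ℂ V) (Vχ χ)) j)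
        rintro - ⟨x, hx, rfl⟩
        exact hQmapsTo x hx
      have hVP : Vχ χ ≤ P ⊔ ⨆ j, Submodule.map (A j - χ j • 1 : Module.End ℂ V) (Vχ χ) := by
        intro y hy
        obtain ⟨x, hx, rfl⟩ := hQsurj y hy
        obtain ⟨s₁, hs₁, s₂, hs₂, rfl⟩ := Submodule.mem_sup.mp (hu2 χ hx)
        rw [map_add]
        refine Submodule.add_mem _ (Submodule.mem_sup_left (hmapQspan ⟨s₁, hs₁, rfl⟩)) ?_
        exact Submodule.mem_sup_right (hmapQM1 ⟨s₂, hs₂, rfl⟩)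
      refine nakayama m (fun j => (A j - χ j • 1 : Module.End ℂ V))
        (fun i j => commSub m A hcomm i j (χ i) (χ j)) n (Vχ χ) P
        (fun j => hNinv χ j (χ j)) ?_ (fun j x hx => hnil χ j x hx) hVP
      rintro j - ⟨x, hx, rfl⟩
      rw [LinearMap.sub_apply, LinearMap.smul_apply, Module.End.one_apply]
      exact sub_mem (hPinv (A j) (Algebra.subset_adjoin ⟨j, rfl⟩) x hx)
        (Submodule.smul_mem _ _ hx)
end
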